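/- Let m = 2s+1 be odd, and suppose 𝒜₀ is a Hamming ball of center X (|X| = m) and radius r, ℬ₀ a Hamming ball of center ∅ and radius r, with |𝒜₀| = |ℬ₀| and d(𝒜₀, ℬ₀) ≥ 2. Then r ≤ s; moreover if r ≤ s−1 then |2^X \ (𝒜₀ ∪ ℬ₀)| ≥ 2·C(m, s). -/

import Mathlib

open Finset

/-- Hamming distance between two finsets: size of the symmetric difference. -/
def hdist {α : Type*} [DecidableEq α] (A B : Finset α) : ℕ :=
  ((A \ B) ∪ (B \ A)).card

/-- Hamming distance between two set systems: the minimum over pairs. -/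
noncomputable def famDist {α : Type*} [DecidableEq α] (𝒜 ℬ : Finset (Finset α)) : ℕ :=
  sInf {n | ∃ A ∈ 𝒜, ∃ B ∈ ℬ, hdist A B = n}

/-- The Hamming ball of center `A` and radius `r`. -/
def hamBall {α : Type*} [DecidableEq α] [Fintype α] (A : Finset α) (r : ℕ) :
    Finset (Finset α) :=
  Finset.univ.filter fun B => hdist A B ≤ r

/-- `𝒞` is *a* Hamming ball of center `c` (of some radius `r ≥ 1`):
`H_{r-1}(c) ⊆ 𝒞 ⊆ H_r(c)`. -/
def IsHamBall {α : Type*} [DecidableEq α] [Fintype α] (c : Finset α)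
    (𝒞 : Finset (Finset α)) : Prop :=
  ∃ r : ℕ, 1 ≤ r ∧ hamBall c (r - 1) ⊆ 𝒞 ∧ 𝒞 ⊆ hamBall c r

/-- For `m = 2s + 1` odd: if `𝒜₀` is a Hamming ball of center `X` and radius `r`, `ℬ₀` a
Hamming ball of center `∅` and radius `r`, with equal sizes and pairwise distance at least
`2`, then `r ≤ s`; moreover if `r ≤ s - 1` then at least `2·C(m, s)` sets lie outside
`𝒜₀ ∪ ℬ₀`. -/
theorem hamming_balls_odd {α : Type*} [DecidableEq α] [Fintype α] (s r : ℕ)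
    (hm : Fintype.card α = 2 * s + 1) (hr : 1 ≤ r) (𝒜₀ ℬ₀ : Finset (Finset α))
    (h𝒜l : hamBall (Finset.univ : Finset α) (r - 1) ⊆ 𝒜₀) (h𝒜u : 𝒜₀ ⊆ hamBall Finset.univ r)
    (hℬl : hamBall (∅ : Finset α) (r - 1) ⊆ ℬ₀) (hℬu : ℬ₀ ⊆ hamBall ∅ r)
    (hcard : 𝒜₀.card = ℬ₀.card)
    (hdist2 : ∀ A ∈ 𝒜₀, ∀ B ∈ ℬ₀, 2 ≤ hdist A B) :
    r ≤ s ∧ (r < s →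
      2 * Nat.choose (2 * s + 1) s ≤
        ((Finset.univ : Finset (Finset α)) \ (𝒜₀ ∪ ℬ₀)).card) := by
  have hdu : ∀ B : Finset α, hdist Finset.univ B = 2 * s + 1 - B.card := by
    intro B
    have h1 : B \ Finset.univ = ∅ := by simp
    simp [hdist, h1, ← Finset.compl_eq_univ_sdiff, Finset.card_compl, hm]
  have hde : ∀ B : Finset α, hdist (∅ : Finset α) B = B.card := by
    intro B; simp [hdist]
  have hBcard_le : ∀ B : Finset α, B.card ≤ 2 * s + 1 := by
    intro B; rw [← hm]; exact Finset.card_le_univ B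
  have hrs : r ≤ s := by
    by_contra h
    push_neg at h
    obtain ⟨A, -, hAc⟩ := Finset.exists_subset_card_eq (s := (Finset.univ : Finset α)) (n := s + 1)
      (by rw [Finset.card_univ, hm]; omega)
    obtain ⟨B, hBA, hBc⟩ := Finset.exists_subset_card_eq (s := A) (n := s) (by omega)
    have hA : A ∈ 𝒜₀ := by
      apply h𝒜l
      simp only [hamBall, Finset.mem_filter, Finset.mem_univ, true_and, hdu, hAc]
      omega
    have hB : B ∈ ℬ₀ := by
      apply hℬl
      simp only [hamBall, Finset.mem_filter, Finset.mem_univ, true_and, hde, hBc]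
      omega
    have hd : hdist A B = 1 := by
      have h2 : B \ A = ∅ := Finset.sdiff_eq_empty_iff_subset.mpr hBA
      simp [hdist, h2, Finset.card_sdiff_of_subset hBA, hAc, hBc]
    have := hdist2 A hA B hB
    omega
  refine ⟨hrs, fun hlt => ?_⟩
  have hsub : ∀ k : ℕ, k = s ∨ k = s + 1 →
      Finset.powersetCard k (Finset.univ : Finset α) ⊆
        (Finset.univ : Finset (Finset α)) \ (𝒜₀ ∪ ℬ₀) := by
    intro k hk B hB
    rw [Finset.mem_powersetCard] at hB
    obtain ⟨-, hBc⟩ := hB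
    rw [Finset.mem_sdiff, Finset.mem_union]
    refine ⟨Finset.mem_univ _, ?_⟩
    rintro (hB | hB)
    · have := h𝒜u hB
      simp only [hamBall, Finset.mem_filter, hdu] at this
      have := hBcard_le B
      omega
    · have := hℬu hB
      simp only [hamBall, Finset.mem_filter, hde] at this
      omega
  have hdisj : Disjoint (Finset.powersetCard s (Finset.univ : Finset α))
      (Finset.powersetCard (s + 1) (Finset.univ : Finset α)) := by
    rw [Finset.disjoint_left]
    intro B h1 h2
    rw [Finset.mem_powersetCard] at h1 h2
    omega
  have hunion : Finset.powersetCard s (Finset.univ : Finset α) ∪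
      Finset.powersetCard (s + 1) (Finset.univ : Finset α) ⊆
      (Finset.univ : Finset (Finset α)) \ (𝒜₀ ∪ ℬ₀) :=
    Finset.union_subset (hsub s (Or.inl rfl)) (hsub (s + 1) (Or.inr rfl))
  calc 2 * Nat.choose (2 * s + 1) s
      = Nat.choose (2 * s + 1) s + Nat.choose (2 * s + 1) (s + 1) := by
        have : Nat.choose (2 * s + 1) (s + 1) = Nat.choose (2 * s + 1) s := by
          have := Nat.choose_symm (n := 2 * s + 1) (k := s) (by omega)
          simpa [show 2 * s + 1 - s = s + 1 by omega] using this
        omega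
    _ = (Finset.powersetCard s (Finset.univ : Finset α) ∪
          Finset.powersetCard (s + 1) (Finset.univ : Finset α)).card := by
        rw [Finset.card_union_of_disjoint hdisj, Finset.card_powersetCard,
          Finset.card_powersetCard, Finset.card_univ, hm]
    _ ≤ _ := Finset.card_le_card hunion
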